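/- arXiv:1211.3318 — 6 statements merged into one kernel-verified Lean document; each statement's English description precedes it below -/
import Mathlib

section
/- Let f : ℝⁿ → ℝⁿ be continuous, let T ≥ 0, and let x : [0,T] → ℝⁿ be continuously differentiable with x'(t) = f(x(t)) for all t ∈ [0,T]. Let μ be the occupation measure of the solution, i.e. the pushforward under the map t ↦ x(t) of the Lebesgue measure on [0,T]. Then for every continuously differentiable function v : ℝⁿ → ℝ one has ∫ ∇v(y) · f(y) dμ(y) = v(x(T)) − v(x(0)). -/
open MeasureTheory
open scoped RealInnerProductSpace

/-- If `f` is continuous, `x` is a continuously differentiable solution of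
`x' = f(x)` on `[0,T]`, and `μ` is the occupation measure of the solution (the pushforward
of Lebesgue measure on `[0,T]` under `x`), then for every `C¹` function `v`,
`∫ ⟪∇v(y), f(y)⟫ dμ(y) = v(x T) - v(x 0)`. -/
theorem occupation_measure_dynamics {n : ℕ}
    (f : EuclideanSpace ℝ (Fin n) → EuclideanSpace ℝ (Fin n)) (hf : Continuous f)
    (T : ℝ) (hT : 0 ≤ T)
    (x : ℝ → EuclideanSpace ℝ (Fin n))
    (hx : ∀ t ∈ Set.Icc (0 : ℝ) T, HasDerivAt x (f (x t)) t)
    (μ : Measure (EuclideanSpace ℝ (Fin n)))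
    (hμ : μ = Measure.map x (volume.restrict (Set.Icc (0 : ℝ) T)))
    (v : EuclideanSpace ℝ (Fin n) → ℝ) (hv : ContDiff ℝ 1 v) :
    ∫ y, ⟪gradient v y, f y⟫ ∂μ = v (x T) - v (x 0) := by
  have hxc : ContinuousOn x (Set.Icc 0 T) := fun t ht =>
    (hx t ht).continuousAt.continuousWithinAt
  have hgc : Continuous (fun y => (⟪gradient v y, f y⟫ : ℝ)) := by
    have hgrad : Continuous (gradient v) := by
      have := (contDiff_one_iff_fderiv.mp hv).2
      unfold gradient
      exact (LinearIsometryEquiv.continuous _).comp this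
    exact hgrad.inner hf
  have hxmeas : AEMeasurable x (volume.restrict (Set.Icc (0:ℝ) T)) :=
    (hxc.aemeasurable measurableSet_Icc)
  rw [hμ, integral_map hxmeas hgc.aestronglyMeasurable]
  have key : ∀ t ∈ Set.Icc (0:ℝ) T,
      HasDerivAt (fun s => v (x s)) (⟪gradient v (x t), f (x t)⟫) t := by
    intro t ht
    have hg : HasGradientAt v (gradient v (x t)) (x t) :=
      ((hv.differentiable one_ne_zero) (x t)).hasGradientAt
    have := ((hv.differentiable one_ne_zero) (x t)).hasFDerivAt.comp_hasDerivAt t (hx t ht)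
    have e : fderiv ℝ v (x t) (f (x t)) = ⟪gradient v (x t), f (x t)⟫ := by
      simp [gradient, InnerProductSpace.toDual_symm_apply]
    rw [← e]; exact this
  have hIoc : ∫ t in Set.Icc (0:ℝ) T, ⟪gradient v (x t), f (x t)⟫
      = ∫ t in (0:ℝ)..T, ⟪gradient v (x t), f (x t)⟫ := by
    rw [intervalIntegral.integral_of_le hT, MeasureTheory.integral_Icc_eq_integral_Ioc]
  rw [hIoc]
  apply intervalIntegral.integral_eq_sub_of_hasDerivAt
  · intro t ht
    exact key t (Set.uIcc_of_le hT ▸ ht)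
  · apply ContinuousOn.intervalIntegrable
    exact hgc.comp_continuousOn (Set.uIcc_of_le hT ▸ hxc)
end

section
/- In the PWA optimal control setting, for every admissible process (T, u, x) and every continuously differentiable function v : ℝⁿ → ℝ, the local occupation measures μ₁, …, μ_r satisfy Σ_{i=1}^r ∫_{X_i × U} ∇v(y) · (A_i y + a_i + B_i w) dμ_i(y,w) = v(x(T)) − v(x(0)). -/
open MeasureTheory Set
open scoped RealInnerProductSpace

open Filter
open scoped Topology


section Aux

variable {n : ℕ}

lemma pwa_integrable_inner_of_bound {μ : Measure ℝ} {c h : ℝ → EuclideanSpace ℝ (Fin n)}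
    (hc : AEStronglyMeasurable c μ) (hh : Integrable h μ) (C : ℝ)
    (hC : ∀ᵐ t ∂μ, ‖c t‖ ≤ C) :
    Integrable (fun t => ⟪c t, h t⟫) μ := by
  refine (hh.norm.const_mul C).mono' (hc.inner hh.aestronglyMeasurable) ?_
  filter_upwards [hC] with t ht
  calc ‖⟪c t, h t⟫‖ ≤ ‖c t‖ * ‖h t‖ := norm_inner_le_norm _ _
    _ ≤ C * ‖h t‖ := mul_le_mul_of_nonneg_right ht (norm_nonneg _)

lemma pwa_inner_gradient (v : EuclideanSpace ℝ (Fin n) → ℝ) (p w : EuclideanSpace ℝ (Fin n)) :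
    ⟪gradient v p, w⟫ = fderiv ℝ v p w := by
  rw [gradient, ← InnerProductSpace.toDual_apply_apply, LinearIsometryEquiv.apply_symm_apply]

lemma pwa_continuous_gradient {v : EuclideanSpace ℝ (Fin n) → ℝ} (hv : ContDiff ℝ 1 v) :
    Continuous (gradient v) :=
  (InnerProductSpace.toDual ℝ _).symm.continuous.comp (hv.continuous_fderiv one_ne_zero)

lemma pwa_inv_nat_tendsto : Tendsto (fun k : ℕ => ((k : ℝ) + 1)⁻¹) atTop (𝓝 0) := by
  simpa [one_div] using tendsto_one_div_add_atTop_nhds_zero_nat (𝕜 := ℝ)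

lemma pwa_ftc_grad (T : ℝ) (hT : 0 ≤ T) (d : ℝ → EuclideanSpace ℝ (Fin n))
    (hd : Integrable d) (x0 : EuclideanSpace ℝ (Fin n))
    (v : EuclideanSpace ℝ (Fin n) → ℝ) (hv : ContDiff ℝ 1 v) :
    ∫ t in Icc (0 : ℝ) T, ⟪gradient v (x0 + ∫ s in (0 : ℝ)..t, d s), d t⟫
      = v (x0 + ∫ s in (0 : ℝ)..T, d s) - v x0 := by
  set y : ℝ → EuclideanSpace ℝ (Fin n) := fun t => x0 + ∫ s in (0 : ℝ)..t, d s with hy_def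
  have hy_cont : Continuous y := continuous_const.add (hd.continuous_primitive 0)
  have hgc : Continuous (gradient v) := pwa_continuous_gradient hv
  set K : Set (EuclideanSpace ℝ (Fin n)) := Metric.cthickening 1 (y '' Icc 0 T) with hK_def
  have hK : IsCompact K := (isCompact_Icc.image hy_cont).cthickening
  obtain ⟨M, hM⟩ := hK.exists_bound_of_continuousOn hgc.continuousOn
  have hy0K : y 0 ∈ K := Metric.self_subset_cthickening _ ⟨0, ⟨le_rfl, hT⟩, rfl⟩
  have hM0 : 0 ≤ M := le_trans (norm_nonneg _) (hM (y 0) hy0K)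
  -- continuous approximations of d
  choose g hg_supp hg_close hg_cont hg_int using
    fun k : ℕ => hd.exists_hasCompactSupport_integral_sub_le
      (ε := ((k : ℝ) + 1)⁻¹) (by positivity)
  set z : ℕ → ℝ → EuclideanSpace ℝ (Fin n) :=
    fun k t => x0 + ∫ s in (0 : ℝ)..t, g k s with hz_def
  have hz_cont : ∀ k, Continuous (z k) := fun k =>
    continuous_const.add ((hg_int k).continuous_primitive 0)
  have hzy : ∀ k, ∀ t ∈ Icc (0 : ℝ) T, ‖z k t - y t‖ ≤ ((k : ℝ) + 1)⁻¹ := by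
    intro k t ht
    have h1 : y t - z k t = ∫ s in (0 : ℝ)..t, (d s - g k s) := by
      rw [intervalIntegral.integral_sub hd.intervalIntegrable (hg_int k).intervalIntegrable]
      simp only [hy_def, hz_def]
      abel
    rw [norm_sub_rev, h1]
    calc ‖∫ s in (0 : ℝ)..t, (d s - g k s)‖ ≤ ∫ s in (0 : ℝ)..t, ‖d s - g k s‖ :=
          intervalIntegral.norm_integral_le_integral_norm ht.1
      _ = ∫ s in Ioc (0 : ℝ) t, ‖d s - g k s‖ := intervalIntegral.integral_of_le ht.1
      _ ≤ ∫ s, ‖d s - g k s‖ :=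
          setIntegral_le_integral (hd.sub (hg_int k)).norm (ae_of_all _ fun s => norm_nonneg _)
      _ ≤ ((k : ℝ) + 1)⁻¹ := hg_close k
  have hzmem : ∀ k, ∀ t ∈ Icc (0 : ℝ) T, z k t ∈ K := by
    intro k t ht
    refine Metric.mem_cthickening_of_dist_le (z k t) (y t) 1 _ ⟨t, ht, rfl⟩ ?_
    rw [dist_eq_norm]
    refine (hzy k t ht).trans ?_
    rw [inv_le_one_iff₀]
    right; linarith [Nat.cast_nonneg (α := ℝ) k]
  have hlimz : ∀ t ∈ Icc (0 : ℝ) T, Tendsto (fun k => z k t) atTop (𝓝 (y t)) := by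
    intro t ht
    rw [tendsto_iff_dist_tendsto_zero]
    refine squeeze_zero (fun _ => dist_nonneg) (fun k => ?_) pwa_inv_nat_tendsto
    rw [dist_eq_norm]; exact hzy k t ht
  -- FTC for each approximation
  have key : ∀ k, ∫ t in Icc (0 : ℝ) T, ⟪gradient v (z k t), g k t⟫ = v (z k T) - v x0 := by
    intro k
    have hderiv : ∀ t ∈ uIcc (0 : ℝ) T,
        HasDerivAt (fun t => v (z k t)) ⟪gradient v (z k t), g k t⟫ t := by
      intro t _
      have h1 : HasDerivAt (z k) (g k t) t :=
        (((hg_cont k).integral_hasStrictDerivAt 0 t).hasDerivAt).const_add x0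
      have h3 := ((hv.differentiable one_ne_zero) (z k t)).hasFDerivAt
      have h4 := h3.comp_hasDerivAt t h1
      rw [pwa_inner_gradient]
      exact h4
    have hcont : Continuous fun t => ⟪gradient v (z k t), g k t⟫ :=
      (hgc.comp (hz_cont k)).inner (hg_cont k)
    have h5 := intervalIntegral.integral_eq_sub_of_hasDerivAt hderiv
      (hcont.intervalIntegrable 0 T)
    rw [intervalIntegral.integral_of_le hT, ← integral_Icc_eq_integral_Ioc] at h5
    rw [h5]
    congr 2
    simp [hz_def]
  -- limit of right-hand sides
  have lim1 : Tendsto (fun k => v (z k T) - v x0) atTop (𝓝 (v (y T) - v x0)) := by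
    have hT' : T ∈ Icc (0 : ℝ) T := ⟨hT, le_rfl⟩
    exact ((hv.continuous.tendsto _).comp (hlimz T hT')).sub tendsto_const_nhds
  -- limit of left-hand sides
  have hbd : ∀ k, ∀ᵐ t ∂(volume.restrict (Icc (0 : ℝ) T)), ‖gradient v (z k t)‖ ≤ M := by
    intro k
    filter_upwards [ae_restrict_mem measurableSet_Icc] with t ht
    exact hM _ (hzmem k t ht)
  have int2 : ∀ k, Integrable (fun t => ⟪gradient v (z k t), d t⟫)
      (volume.restrict (Icc (0 : ℝ) T)) := fun k =>
    pwa_integrable_inner_of_bound (hgc.comp (hz_cont k)).aestronglyMeasurable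
      hd.integrableOn M (hbd k)
  have int1 : ∀ k, Integrable (fun t => ⟪gradient v (z k t), g k t - d t⟫)
      (volume.restrict (Icc (0 : ℝ) T)) := fun k =>
    pwa_integrable_inner_of_bound (hgc.comp (hz_cont k)).aestronglyMeasurable
      ((hg_int k).sub hd).integrableOn M (hbd k)
  have split : ∀ k, ∫ t in Icc (0 : ℝ) T, ⟪gradient v (z k t), g k t⟫
      = (∫ t in Icc (0 : ℝ) T, ⟪gradient v (z k t), g k t - d t⟫)
        + ∫ t in Icc (0 : ℝ) T, ⟪gradient v (z k t), d t⟫ := by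
    intro k
    rw [← integral_add (int1 k) (int2 k)]
    refine integral_congr_ae (ae_of_all _ fun t => ?_)
    simp only [inner_sub_right]
    ring
  have lim2 : Tendsto (fun k => ∫ t in Icc (0 : ℝ) T, ⟪gradient v (z k t), g k t - d t⟫)
      atTop (𝓝 0) := by
    refine squeeze_zero_norm (fun k => ?_)
      (by simpa using pwa_inv_nat_tendsto.const_mul M)
    calc ‖∫ t in Icc (0 : ℝ) T, ⟪gradient v (z k t), g k t - d t⟫‖
        ≤ ∫ t in Icc (0 : ℝ) T, M * ‖d t - g k t‖ := by
          refine norm_integral_le_of_norm_le (((hd.sub (hg_int k)).norm.const_mul M).integrableOn) ?_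
          filter_upwards [hbd k] with t ht
          calc ‖⟪gradient v (z k t), g k t - d t⟫‖ ≤ ‖gradient v (z k t)‖ * ‖g k t - d t‖ :=
                norm_inner_le_norm _ _
            _ ≤ M * ‖d t - g k t‖ := by
                rw [norm_sub_rev]
                exact mul_le_mul_of_nonneg_right ht (norm_nonneg _)
      _ = M * ∫ t in Icc (0 : ℝ) T, ‖d t - g k t‖ := integral_const_mul M _
      _ ≤ M * ((k : ℝ) + 1)⁻¹ := by
          refine mul_le_mul_of_nonneg_left ?_ hM0
          refine le_trans (setIntegral_le_integral (hd.sub (hg_int k)).norm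
            (ae_of_all _ fun s => norm_nonneg _)) (hg_close k)
  have lim3 : Tendsto (fun k => ∫ t in Icc (0 : ℝ) T, ⟪gradient v (z k t), d t⟫)
      atTop (𝓝 (∫ t in Icc (0 : ℝ) T, ⟪gradient v (y t), d t⟫)) := by
    refine tendsto_integral_of_dominated_convergence (fun t => M * ‖d t‖)
      (fun k => ((hgc.comp (hz_cont k)).aestronglyMeasurable).inner
        hd.integrableOn.aestronglyMeasurable)
      ((hd.norm.const_mul M).integrableOn) (fun k => ?_) ?_
    · filter_upwards [hbd k] with t ht
      calc ‖⟪gradient v (z k t), d t⟫‖ ≤ ‖gradient v (z k t)‖ * ‖d t‖ := norm_inner_le_norm _ _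
        _ ≤ M * ‖d t‖ := mul_le_mul_of_nonneg_right ht (norm_nonneg _)
    · filter_upwards [ae_restrict_mem measurableSet_Icc] with t ht
      exact ((hgc.tendsto _).comp (hlimz t ht)).inner tendsto_const_nhds
  have limL : Tendsto (fun k => ∫ t in Icc (0 : ℝ) T, ⟪gradient v (z k t), g k t⟫)
      atTop (𝓝 (∫ t in Icc (0 : ℝ) T, ⟪gradient v (y t), d t⟫)) := by
    rw [funext split]
    simpa using lim2.add lim3
  exact tendsto_nhds_unique ((tendsto_congr key).mp limL) lim1

/-- An admissible process for the piecewise-affine optimal control problem with cells `X i`,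
control set `U`, dynamics `ẋ = A i x + a i + B i u` on `X i`, and terminal set `XT`.
The trajectory `x` is absolutely continuous, encoded as the integral of an integrable
velocity `d` that agrees a.e. with the piecewise-affine vector field. -/
structure PWAProcess (n m r : ℕ)
    (X : Fin r → Set (EuclideanSpace ℝ (Fin n)))
    (U : Set (EuclideanSpace ℝ (Fin m)))
    (A : Fin r → (EuclideanSpace ℝ (Fin n) →L[ℝ] EuclideanSpace ℝ (Fin n)))
    (a : Fin r → EuclideanSpace ℝ (Fin n))
    (B : Fin r → (EuclideanSpace ℝ (Fin m) →L[ℝ] EuclideanSpace ℝ (Fin n)))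
    (XT : Set (EuclideanSpace ℝ (Fin n))) where
  /-- terminal time -/
  T : ℝ
  T_pos : 0 < T
  /-- control -/
  u : ℝ → EuclideanSpace ℝ (Fin m)
  u_meas : Measurable u
  u_mem : ∀ t ∈ Icc (0 : ℝ) T, u t ∈ U
  /-- state trajectory -/
  x : ℝ → EuclideanSpace ℝ (Fin n)
  /-- a.e. derivative of the trajectory -/
  d : ℝ → EuclideanSpace ℝ (Fin n)
  d_meas : Measurable d
  d_intble : IntegrableOn d (Icc (0 : ℝ) T)
  /-- absolute continuity: `x` is the integral of its a.e. derivative -/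
  x_eq : ∀ t ∈ Icc (0 : ℝ) T, x t = x 0 + ∫ s in (0 : ℝ)..t, d s
  x_mem : ∀ t ∈ Icc (0 : ℝ) T, x t ∈ ⋃ i, X i
  /-- the ODE holds for almost every time -/
  ode : ∀ᵐ t ∂(volume.restrict (Icc (0 : ℝ) T)),
      ∀ i, x t ∈ X i → d t = A i (x t) + a i + B i (u t)
  /-- times spent on overlaps of cells are negligible -/
  overlap : volume {t ∈ Icc (0 : ℝ) T | ∃ i j, i ≠ j ∧ x t ∈ X i ∧ x t ∈ X j} = 0
  terminal : x T ∈ XT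

/-- The `i`-th local occupation measure of an admissible process:
`μ i (A) = Leb {t ∈ [0,T] : x t ∈ X i and (x t, u t) ∈ A}`. -/
noncomputable def PWAProcess.occ {n m r : ℕ}
    {X : Fin r → Set (EuclideanSpace ℝ (Fin n))}
    {U : Set (EuclideanSpace ℝ (Fin m))}
    {A : Fin r → (EuclideanSpace ℝ (Fin n) →L[ℝ] EuclideanSpace ℝ (Fin n))}
    {a : Fin r → EuclideanSpace ℝ (Fin n)}
    {B : Fin r → (EuclideanSpace ℝ (Fin m) →L[ℝ] EuclideanSpace ℝ (Fin n))}
    {XT : Set (EuclideanSpace ℝ (Fin n))}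
    (P : PWAProcess n m r X U A a B XT) (i : Fin r) :
    Measure (EuclideanSpace ℝ (Fin n) × EuclideanSpace ℝ (Fin m)) :=
  Measure.map (fun t => (P.x t, P.u t))
    (volume.restrict {t | t ∈ Icc (0 : ℝ) P.T ∧ P.x t ∈ X i})

/-- For every admissible process of the PWA optimal control problem and every
`C¹` function `v`, the local occupation measures satisfy
`Σᵢ ∫ ⟪∇v(y), Aᵢ y + aᵢ + Bᵢ w⟫ dμᵢ(y,w) = v(x(T)) - v(x(0))`. -/
theorem pwa_occupation_identity {n m r : ℕ}
    (X : Fin r → Set (EuclideanSpace ℝ (Fin n))) (hX : ∀ i, IsCompact (X i))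
    (hdisj : ∀ i j, i ≠ j → Disjoint (interior (X i)) (interior (X j)))
    (U : Set (EuclideanSpace ℝ (Fin m))) (hU : IsCompact U)
    (A : Fin r → (EuclideanSpace ℝ (Fin n) →L[ℝ] EuclideanSpace ℝ (Fin n)))
    (a : Fin r → EuclideanSpace ℝ (Fin n))
    (B : Fin r → (EuclideanSpace ℝ (Fin m) →L[ℝ] EuclideanSpace ℝ (Fin n)))
    (XT : Set (EuclideanSpace ℝ (Fin n))) (hXT : IsCompact XT)
    (P : PWAProcess n m r X U A a B XT)
    (v : EuclideanSpace ℝ (Fin n) → ℝ) (hv : ContDiff ℝ 1 v) :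
    ∑ i, ∫ p, ⟪gradient v p.1, A i p.1 + a i + B i p.2⟫ ∂(P.occ i)
      = v (P.x P.T) - v (P.x 0) := by

  -- notation
  have hT0 : (0:ℝ) ≤ P.T := P.T_pos.le
  set d' : ℝ → EuclideanSpace ℝ (Fin n) := (Icc (0:ℝ) P.T).indicator P.d with hd'_def
  have hd' : Integrable d' := by
    rw [hd'_def, integrable_indicator_iff measurableSet_Icc]
    exact P.d_intble
  set y : ℝ → EuclideanSpace ℝ (Fin n) := fun t => P.x 0 + ∫ s in (0:ℝ)..t, d' s with hy_def
  have hy_cont : Continuous y := continuous_const.add (hd'.continuous_primitive 0)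
  have hgc : Continuous (gradient v) := pwa_continuous_gradient hv
  have hxy : ∀ t ∈ Icc (0:ℝ) P.T, P.x t = y t := by
    intro t ht
    rw [P.x_eq t ht, hy_def]
    simp only
    congr 1
    refine intervalIntegral.integral_congr fun s hs => ?_
    have hsub : uIcc (0:ℝ) t ⊆ Icc (0:ℝ) P.T := by
      rw [uIcc_of_le ht.1]
      exact Icc_subset_Icc le_rfl ht.2
    exact (indicator_of_mem (hsub hs) P.d).symm
  set S : Fin r → Set ℝ := fun i => Icc (0:ℝ) P.T ∩ y ⁻¹' (X i) with hS_def
  have hSm : ∀ i, MeasurableSet (S i) := fun i =>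
    measurableSet_Icc.inter ((hX i).isClosed.measurableSet.preimage hy_cont.measurable)
  have hSsub : ∀ i, S i ⊆ Icc (0:ℝ) P.T := fun i => inter_subset_left
  have hSold : ∀ i, {t | t ∈ Icc (0:ℝ) P.T ∧ P.x t ∈ X i} = S i := by
    intro i
    ext t
    simp only [hS_def, mem_setOf_eq, mem_inter_iff, mem_preimage]
    constructor
    · rintro ⟨h1, h2⟩; exact ⟨h1, by rwa [← hxy t h1]⟩
    · rintro ⟨h1, h2⟩; exact ⟨h1, by rwa [hxy t h1]⟩
  have hocc : ∀ i, P.occ i = Measure.map (fun t => (y t, P.u t)) (volume.restrict (S i)) := by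
    intro i
    rw [PWAProcess.occ, hSold i]
    refine Measure.map_congr ?_
    refine (ae_restrict_iff' (hSm i)).2 (ae_of_all _ fun t ht => ?_)
    show (P.x t, P.u t) = (y t, P.u t)
    rw [hxy t (hSsub i ht)]
  have hφmeas : AEMeasurable (fun t => (y t, P.u t)) :=
    (hy_cont.measurable.prodMk P.u_meas).aemeasurable
  have hFi_cont : ∀ i, Continuous
      (fun p : EuclideanSpace ℝ (Fin n) × EuclideanSpace ℝ (Fin m) =>
        ⟪gradient v p.1, A i p.1 + a i + B i p.2⟫) := fun i =>
    (hgc.comp continuous_fst).inner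
      ((((A i).continuous.comp continuous_fst).add continuous_const).add
        ((B i).continuous.comp continuous_snd))
  have step2 : ∀ i, ∫ p, ⟪gradient v p.1, A i p.1 + a i + B i p.2⟫ ∂(P.occ i)
      = ∫ t in S i, ⟪gradient v (y t), A i (y t) + a i + B i (P.u t)⟫ := by
    intro i
    rw [hocc i, integral_map hφmeas.restrict (hFi_cont i).aestronglyMeasurable]
  have step3 : ∀ i, ∫ t in S i, ⟪gradient v (y t), A i (y t) + a i + B i (P.u t)⟫
      = ∫ t in S i, ⟪gradient v (y t), d' t⟫ := by
    intro i
    refine integral_congr_ae ?_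
    have hode := ae_restrict_of_ae_restrict_of_subset (hSsub i) P.ode
    filter_upwards [hode, ae_restrict_mem (hSm i)] with t hodet ht
    have hti : t ∈ Icc (0:ℝ) P.T := ht.1
    have hxi : P.x t ∈ X i := by rw [hxy t hti]; exact ht.2
    have heq := hodet i hxi
    rw [hxy t hti] at heq
    rw [hd'_def, indicator_of_mem hti, heq]
  -- summing up
  set G : ℝ → ℝ := fun t => ⟪gradient v (y t), d' t⟫ with hG_def
  have hcover : (⋃ i, S i) = Icc (0:ℝ) P.T := by
    refine Subset.antisymm (iUnion_subset fun i => hSsub i) fun t ht => ?_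
    obtain ⟨_, ⟨i, rfl⟩, hxi⟩ := P.x_mem t ht
    exact mem_iUnion.2 ⟨i, ht, mem_preimage.2 (by rw [← hxy t ht]; exact hxi)⟩
  have hpair : Pairwise (Function.onFun (AEDisjoint volume) S) := by
    intro i j hij
    refine measure_mono_null (fun t ht => ?_) P.overlap
    have h1 : t ∈ Icc (0:ℝ) P.T := ht.1.1
    exact ⟨h1, i, j, hij, by rw [hxy t h1]; exact ht.1.2, by rw [hxy t h1]; exact ht.2.2⟩
  obtain ⟨C, hC⟩ := isCompact_Icc.exists_bound_of_continuousOn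
    ((hgc.comp hy_cont).continuousOn (s := Icc (0:ℝ) P.T))
  have hGint : IntegrableOn G (Icc (0:ℝ) P.T) := by
    refine pwa_integrable_inner_of_bound (hgc.comp hy_cont).aestronglyMeasurable
      hd'.integrableOn C ?_
    filter_upwards [ae_restrict_mem measurableSet_Icc] with t ht
    exact hC t ht
  have step4 : ∑ i, ∫ t in S i, G t = ∫ t in Icc (0:ℝ) P.T, G t := by
    have h := integral_iUnion_ae (μ := volume) (f := G)
      (fun i => (hSm i).nullMeasurableSet) hpair (hcover ▸ hGint)
    rw [hcover, tsum_fintype] at h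
    exact h.symm
  have step5 : ∫ t in Icc (0:ℝ) P.T, G t = v (y P.T) - v (P.x 0) := by
    have h := pwa_ftc_grad P.T hT0 d' hd' (P.x 0) v hv
    simp only [hG_def, hy_def]
    exact h
  calc ∑ i, ∫ p, ⟪gradient v p.1, A i p.1 + a i + B i p.2⟫ ∂(P.occ i)
      = ∑ i, ∫ t in S i, G t := Finset.sum_congr rfl fun i _ => (step2 i).trans (step3 i)
    _ = ∫ t in Icc (0:ℝ) P.T, G t := step4
    _ = v (y P.T) - v (P.x 0) := step5
    _ = v (P.x P.T) - v (P.x 0) := by rw [hxy P.T (right_mem_Icc.2 hT0)]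
end Aux
end

section
/- (Verification / weak duality along trajectories.) In the PWA optimal control setting with continuous running costs L_i and continuous terminal cost L_T, suppose v : ℝⁿ → ℝ is continuously differentiable and satisfies (i) ∇v(y) · (A_i y + a_i + B_i w) + L_i(y,w) ≥ 0 for every i = 1,…,r and every (y,w) ∈ X_i × U, and (ii) v(y) ≤ L_T(y) for every y ∈ X_T. Then for every admissible process (T, u, x) the cost satisfies L_T(x(T)) + Σ_{i=1}^r ∫₀ᵀ L_i(x(t),u(t)) 1_{X_i}(x(t)) dt ≥ v(x(0)). -/
open MeasureTheory Set Topology Filter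
open scoped RealInnerProductSpace

lemma gradient_inner_eq {E : Type*} [NormedAddCommGroup E] [InnerProductSpace ℝ E]
    [CompleteSpace E] (v : E → ℝ) (p w : E) :
    ⟪gradient v p, w⟫ = fderiv ℝ v p w := by
  rw [gradient, InnerProductSpace.toDual_symm_apply]

lemma ftc_cont {E : Type*} [NormedAddCommGroup E] [InnerProductSpace ℝ E] [CompleteSpace E]
    (v : E → ℝ) (hv : ContDiff ℝ 1 v) (x0 : E) (g : ℝ → E) (hg : Continuous g) (T : ℝ) :
    v (x0 + ∫ s in (0:ℝ)..T, g s) - v x0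
      = ∫ t in (0:ℝ)..T, ⟪gradient v (x0 + ∫ s in (0:ℝ)..t, g s), g t⟫ := by
  set z : ℝ → E := fun t => x0 + ∫ s in (0:ℝ)..t, g s with hz
  have hzderiv : ∀ t : ℝ, HasDerivAt z (g t) t := by
    intro t
    have h1 : HasDerivAt (fun u => ∫ s in (0:ℝ)..u, g s) (g t) t :=
      intervalIntegral.integral_hasDerivAt_right (hg.intervalIntegrable 0 t)
        (hg.stronglyMeasurableAtFilter volume (𝓝 t)) hg.continuousAt
    simpa [hz] using h1.const_add x0
  have hderiv : ∀ t ∈ uIcc (0:ℝ) T,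
      HasDerivAt (fun t => v (z t)) (⟪gradient v (z t), g t⟫) t := by
    intro t _
    have hfd : HasFDerivAt v (fderiv ℝ v (z t)) (z t) :=
      ((hv.differentiable one_ne_zero) (z t)).hasFDerivAt
    have := hfd.comp_hasDerivAt t (hzderiv t)
    rw [gradient_inner_eq v (z t) (g t)]; exact this
  have hzcont : Continuous z := by
    have : Continuous (fun t => ∫ s in (0:ℝ)..t, g s) :=
      intervalIntegral.continuous_primitive (μ := volume) (fun a b => hg.intervalIntegrable a b) 0
    exact continuous_const.add this
  have hgradcont : Continuous (gradient v) := by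
    have : Continuous (fderiv ℝ v) := hv.continuous_fderiv one_ne_zero
    exact (LinearIsometryEquiv.continuous _).comp this
  have hint : IntervalIntegrable (fun t => ⟪gradient v (z t), g t⟫) volume 0 T :=
    (Continuous.inner (hgradcont.comp hzcont) hg).intervalIntegrable 0 T
  have := intervalIntegral.integral_eq_sub_of_hasDerivAt hderiv hint
  rw [this]
  simp [hz]

/-- FTC along an absolutely continuous curve with `L¹` velocity, by approximation. -/
lemma ftc_l1 {E : Type*} [NormedAddCommGroup E] [InnerProductSpace ℝ E]
    [FiniteDimensional ℝ E] [MeasurableSpace E] [BorelSpace E]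
    (v : E → ℝ) (hv : ContDiff ℝ 1 v) (x0 : E) (d : ℝ → E)
    (hd : Integrable d volume) (T : ℝ) (hT : 0 ≤ T) :
    v (x0 + ∫ s in (0:ℝ)..T, d s) - v x0
      = ∫ t in (0:ℝ)..T, ⟪gradient v (x0 + ∫ s in (0:ℝ)..t, d s), d t⟫ := by
  have hgradcont : Continuous (gradient v) := by
    have : Continuous (fderiv ℝ v) := hv.continuous_fderiv one_ne_zero
    exact (LinearIsometryEquiv.continuous _).comp this
  -- choose approximating sequence
  have hex : ∀ k : ℕ, ∃ g : ℝ → E, Continuous g ∧ Integrable g volume ∧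
      (∫ s, ‖d s - g s‖) ≤ 1 / (k + 1) := by
    intro k
    obtain ⟨g, _, hint, hgc, hgi⟩ := hd.exists_hasCompactSupport_integral_sub_le
      (ε := 1 / (k + 1)) (by positivity)
    exact ⟨g, hgc, hgi, hint⟩
  choose g hgc hgi hgerr using hex
  set y : ℝ → E := fun t => x0 + ∫ s in (0:ℝ)..t, d s with hy
  set z : ℕ → ℝ → E := fun k t => x0 + ∫ s in (0:ℝ)..t, g k s with hzdef
  have hycont : Continuous y := by
    have : Continuous (fun t => ∫ s in (0:ℝ)..t, d s) :=
      intervalIntegral.continuous_primitive (μ := volume)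
        (fun a b => hd.intervalIntegrable) 0
    exact continuous_const.add this
  -- uniform bound ‖z k t - y t‖ ≤ 1/(k+1)
  have hdiff : ∀ k t, ‖z k t - y t‖ ≤ 1 / ((k:ℝ) + 1) := by
    intro k t
    have h1 : z k t - y t = ∫ s in (0:ℝ)..t, (g k s - d s) := by
      rw [intervalIntegral.integral_sub ((hgi k).intervalIntegrable) hd.intervalIntegrable]
      simp only [hzdef, hy]
      abel
    rw [h1]
    calc ‖∫ s in (0:ℝ)..t, (g k s - d s)‖
        ≤ ∫ s in uIoc (0:ℝ) t, ‖g k s - d s‖ :=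
          intervalIntegral.norm_integral_le_integral_norm_uIoc
      _ ≤ ∫ s, ‖g k s - d s‖ := by
          apply setIntegral_le_integral ((hgi k).sub hd).norm
          filter_upwards with s using norm_nonneg _
      _ ≤ 1 / ((k:ℝ) + 1) := by
          simp_rw [norm_sub_rev]
          exact hgerr k
  have hlim : ∀ t, Tendsto (fun k => z k t) atTop (𝓝 (y t)) := by
    intro t
    rw [tendsto_iff_norm_sub_tendsto_zero]
    apply squeeze_zero (fun k => norm_nonneg _) (hdiff · t)
    exact tendsto_one_div_add_atTop_nhds_zero_nat
  -- compact set containing all curves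
  set K : Set E := Metric.cthickening 1 (y '' Icc 0 T) with hK
  have hKcomp : IsCompact K :=
    (isCompact_Icc.image hycont).cthickening
  have hzK : ∀ k, ∀ t ∈ Icc (0:ℝ) T, z k t ∈ K := by
    intro k t ht
    apply Metric.mem_cthickening_of_dist_le (z k t) (y t) 1 (y '' Icc 0 T) ⟨t, ht, rfl⟩
    rw [dist_eq_norm]
    calc ‖z k t - y t‖ ≤ 1 / ((k:ℝ) + 1) := hdiff k t
      _ ≤ 1 := by
          rw [div_le_one (by positivity)]
          push_cast; linarith [Nat.cast_nonneg (α := ℝ) k]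
  obtain ⟨M0, hM0⟩ := hKcomp.exists_bound_of_continuousOn hgradcont.continuousOn
  set M := max M0 0 with hM
  have hMnn : 0 ≤ M := le_max_right _ _
  have hMb : ∀ p ∈ K, ‖gradient v p‖ ≤ M := fun p hp => (hM0 p hp).trans (le_max_left _ _)
  set μ := volume.restrict (Ioc (0:ℝ) T) with hμ
  have hmem : ∀ᵐ t ∂μ, t ∈ Icc (0:ℝ) T := by
    filter_upwards [ae_restrict_mem measurableSet_Ioc] with t ht using Ioc_subset_Icc_self ht
  -- convergence of integrals
  have hJmeas : ∀ (c : ℝ → E), Continuous c →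
      AEStronglyMeasurable (fun t => ⟪gradient v (c t), d t⟫) μ :=
    fun c hc => AEStronglyMeasurable.inner
      ((hgradcont.comp hc).aestronglyMeasurable) (hd.aestronglyMeasurable.restrict)
  have hJ : Tendsto (fun k => ∫ t, ⟪gradient v (z k t), d t⟫ ∂μ) atTop
      (𝓝 (∫ t, ⟪gradient v (y t), d t⟫ ∂μ)) := by
    apply tendsto_integral_of_dominated_convergence (fun t => M * ‖d t‖)
    · intro k
      exact hJmeas _ (continuous_const.add (intervalIntegral.continuous_primitive (μ := volume)
        (fun a b => (hgi k).intervalIntegrable) 0))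
    · exact (hd.norm.restrict.const_mul M)
    · intro k
      filter_upwards [hmem] with t ht
      calc ‖⟪gradient v (z k t), d t⟫‖ ≤ ‖gradient v (z k t)‖ * ‖d t‖ := norm_inner_le_norm _ _
        _ ≤ M * ‖d t‖ := by
            apply mul_le_mul_of_nonneg_right (hMb _ (hzK k t ht)) (norm_nonneg _)
    · filter_upwards with t
      exact Tendsto.inner ((hgradcont.tendsto (y t)).comp (hlim t)) tendsto_const_nhds
  have hR : Tendsto (fun k => ∫ t, ⟪gradient v (z k t), g k t - d t⟫ ∂μ) atTop (𝓝 0) := by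
    have hb : ∀ k : ℕ, ‖∫ t, ⟪gradient v (z k t), g k t - d t⟫ ∂μ‖ ≤ M * (1 / ((k:ℝ) + 1)) := by
      intro k
      have hint : Integrable (fun t => M * ‖g k t - d t‖) μ :=
        (((hgi k).sub hd).norm.restrict.const_mul M)
      calc ‖∫ t, ⟪gradient v (z k t), g k t - d t⟫ ∂μ‖
          ≤ ∫ t, ‖⟪gradient v (z k t), g k t - d t⟫‖ ∂μ := norm_integral_le_integral_norm _
        _ ≤ ∫ t, M * ‖g k t - d t‖ ∂μ := by
            apply integral_mono_of_nonneg (by filter_upwards with t using norm_nonneg _) hint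
            filter_upwards [hmem] with t ht
            calc ‖⟪gradient v (z k t), g k t - d t⟫‖
                ≤ ‖gradient v (z k t)‖ * ‖g k t - d t‖ := norm_inner_le_norm _ _
              _ ≤ M * ‖g k t - d t‖ :=
                  mul_le_mul_of_nonneg_right (hMb _ (hzK k t ht)) (norm_nonneg _)
        _ = M * ∫ t, ‖g k t - d t‖ ∂μ := by rw [integral_const_mul]
        _ ≤ M * (1 / ((k:ℝ) + 1)) := by
            apply mul_le_mul_of_nonneg_left _ hMnn
            calc ∫ t, ‖g k t - d t‖ ∂μ ≤ ∫ t, ‖g k t - d t‖ := by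
                  apply setIntegral_le_integral ((hgi k).sub hd).norm
                  filter_upwards with s using norm_nonneg _
              _ ≤ 1 / ((k:ℝ) + 1) := by simp_rw [norm_sub_rev]; exact hgerr k
    have hlim0 : Tendsto (fun k : ℕ => M * (1 / ((k:ℝ) + 1))) atTop (𝓝 0) := by
      simpa using (tendsto_const_nhds : Tendsto (fun _ : ℕ => M) atTop (𝓝 M)).mul tendsto_one_div_add_atTop_nhds_zero_nat
    exact squeeze_zero_norm hb hlim0
  -- combine
  have hIk : ∀ k : ℕ, v (z k T) - v x0 = (∫ t, ⟪gradient v (z k t), d t⟫ ∂μ)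
      + ∫ t, ⟪gradient v (z k t), g k t - d t⟫ ∂μ := by
    intro k
    have hzc : Continuous (z k) := continuous_const.add
      (intervalIntegral.continuous_primitive (μ := volume) (fun a b => (hgi k).intervalIntegrable) 0)
    have h1 := ftc_cont v hv x0 (g k) (hgc k) T
    have h2 : (∫ t in (0:ℝ)..T, ⟪gradient v (z k t), g k t⟫)
        = ∫ t, ⟪gradient v (z k t), g k t⟫ ∂μ := by
      rw [intervalIntegral.integral_of_le hT]
    rw [show v (x0 + ∫ s in (0:ℝ)..T, g k s) = v (z k T) from rfl] at h1
    rw [h1, h2, ← integral_add]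
    · congr 1; ext t
      rw [← inner_add_right]
      congr 1; abel
    · exact Integrable.mono' (hd.norm.restrict.const_mul M)
        (hJmeas _ hzc)
        (by filter_upwards [hmem] with t ht
            exact (norm_inner_le_norm _ _).trans
              (mul_le_mul_of_nonneg_right (hMb _ (hzK k t ht)) (norm_nonneg _)))
    · apply Integrable.mono' ((((hgi k).sub hd).norm.restrict.const_mul M))
        (AEStronglyMeasurable.inner ((hgradcont.comp hzc).aestronglyMeasurable)
          (((hgi k).sub hd).aestronglyMeasurable.restrict))
      filter_upwards [hmem] with t ht
      exact (norm_inner_le_norm _ _).trans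
        (mul_le_mul_of_nonneg_right (hMb _ (hzK k t ht)) (norm_nonneg _))
  have hL : Tendsto (fun k => v (z k T) - v x0) atTop (𝓝 (v (y T) - v x0)) :=
    (((hv.continuous).tendsto (y T)).comp (hlim T)).sub tendsto_const_nhds
  have hR2 : Tendsto (fun k => v (z k T) - v x0) atTop
      (𝓝 ((∫ t, ⟪gradient v (y t), d t⟫ ∂μ) + 0)) := by
    simp_rw [hIk]; exact hJ.add hR
  have heq := tendsto_nhds_unique hL hR2
  have h2 : (∫ t in (0:ℝ)..T, ⟪gradient v (x0 + ∫ s in (0:ℝ)..t, d s), d t⟫)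
      = ∫ t, ⟪gradient v (y t), d t⟫ ∂μ := intervalIntegral.integral_of_le hT
  rw [h2]
  simpa [hy] using heq

lemma pwa_core {n m r : ℕ}
    (X : Fin r → Set (EuclideanSpace ℝ (Fin n))) (hX : ∀ i, IsCompact (X i))
    (U : Set (EuclideanSpace ℝ (Fin m)))
    (A : Fin r → (EuclideanSpace ℝ (Fin n) →L[ℝ] EuclideanSpace ℝ (Fin n)))
    (a : Fin r → EuclideanSpace ℝ (Fin n)) (hUc : IsCompact U)
    (B : Fin r → (EuclideanSpace ℝ (Fin m) →L[ℝ] EuclideanSpace ℝ (Fin n)))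
    (L : Fin r → (EuclideanSpace ℝ (Fin n) × EuclideanSpace ℝ (Fin m) → ℝ))
    (hL : ∀ i, Continuous (L i))
    (v : EuclideanSpace ℝ (Fin n) → ℝ) (hv : ContDiff ℝ 1 v)
    (T : ℝ) (hT : 0 ≤ T)
    (x : ℝ → EuclideanSpace ℝ (Fin n)) (u : ℝ → EuclideanSpace ℝ (Fin m))
    (u_meas : Measurable u) (u_mem : ∀ t ∈ Icc (0:ℝ) T, u t ∈ U)
    (d : ℝ → EuclideanSpace ℝ (Fin n)) (d_meas : Measurable d)
    (d_intble : IntegrableOn d (Icc (0:ℝ) T))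
    (x_eq : ∀ t ∈ Icc (0:ℝ) T, x t = x 0 + ∫ s in (0:ℝ)..t, d s)
    (x_mem : ∀ t ∈ Icc (0:ℝ) T, x t ∈ ⋃ i, X i)
    (ode : ∀ᵐ t ∂(volume.restrict (Icc (0:ℝ) T)),
      ∀ i, x t ∈ X i → d t = A i (x t) + a i + B i (u t))
    (overlap : volume {t ∈ Icc (0:ℝ) T | ∃ i j, i ≠ j ∧ x t ∈ X i ∧ x t ∈ X j} = 0)
    (hpos : ∀ i, ∀ y ∈ X i, ∀ w ∈ U,
      0 ≤ ⟪gradient v y, A i y + a i + B i w⟫ + L i (y, w)) :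
    v (x 0) ≤ v (x T) + ∑ i, ∫ t in (0:ℝ)..T,
        L i (x t, u t) * (X i).indicator (fun _ => (1:ℝ)) (x t) := by
  classical

  set d' : ℝ → EuclideanSpace ℝ (Fin n) := (Icc (0:ℝ) T).indicator d with hd'def
  have hd' : Integrable d' volume := d_intble.integrable_indicator measurableSet_Icc
  set y : ℝ → EuclideanSpace ℝ (Fin n) := fun t => x 0 + ∫ s in (0:ℝ)..t, d' s with hydef
  have hycont : Continuous y := continuous_const.add
    (intervalIntegral.continuous_primitive (μ := volume) (fun a b => hd'.intervalIntegrable) 0)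
  have hyx : ∀ t ∈ Icc (0:ℝ) T, y t = x t := by
    intro t ht
    rw [x_eq t ht, hydef]
    simp only
    congr 1
    apply intervalIntegral.integral_congr
    intro s hs
    rw [uIcc_of_le ht.1] at hs
    exact indicator_of_mem (Icc_subset_Icc le_rfl ht.2 hs) d
  set μ := volume.restrict (Ioc (0:ℝ) T) with hμdef
  haveI : IsFiniteMeasure μ := ⟨by
    rw [hμdef, Measure.restrict_apply_univ]; exact measure_Ioc_lt_top⟩
  have hmem : ∀ᵐ t ∂μ, t ∈ Icc (0:ℝ) T := by
    filter_upwards [ae_restrict_mem measurableSet_Ioc] with t ht using Ioc_subset_Icc_self ht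
  have hμle : μ ≤ volume.restrict (Icc (0:ℝ) T) :=
    Measure.restrict_mono Ioc_subset_Icc_self le_rfl
  have hode : ∀ᵐ t ∂μ, ∀ i, x t ∈ X i → d t = A i (x t) + a i + B i (u t) :=
    ode.filter_mono (ae_mono hμle)
  have hover : ∀ᵐ t ∂μ, ¬ (t ∈ Icc (0:ℝ) T ∧ ∃ i j, i ≠ j ∧ x t ∈ X i ∧ x t ∈ X j) := by
    have h0 : μ {t | t ∈ Icc (0:ℝ) T ∧ ∃ i j, i ≠ j ∧ x t ∈ X i ∧ x t ∈ X j} = 0 :=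
      le_antisymm (le_trans (Measure.restrict_le_self _) (le_of_eq overlap)) zero_le
    exact measure_eq_zero_iff_ae_notMem.mp h0
  -- gradient bound on the trajectory
  have hgradcont : Continuous (gradient v) := by
    have : Continuous (fderiv ℝ v) := hv.continuous_fderiv one_ne_zero
    exact (LinearIsometryEquiv.continuous _).comp this
  obtain ⟨M0, hM0⟩ := ((isCompact_Icc.image hycont)).exists_bound_of_continuousOn
    hgradcont.continuousOn
  have hGbd : ∀ t ∈ Icc (0:ℝ) T, ‖gradient v (y t)‖ ≤ M0 := fun t ht =>
    hM0 _ ⟨t, ht, rfl⟩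
  -- running cost
  set ℓ : ℝ → ℝ := fun t => ∑ i, L i (x t, u t) * (X i).indicator (fun _ => (1:ℝ)) (x t)
    with hℓdef
  -- integrability of the inner product term
  have hGmeas : AEStronglyMeasurable (fun t => ⟪gradient v (y t), d' t⟫) μ :=
    AEStronglyMeasurable.inner ((hgradcont.comp hycont).aestronglyMeasurable)
      (hd'.aestronglyMeasurable.restrict)
  have hGint : Integrable (fun t => ⟪gradient v (y t), d' t⟫) μ := by
    apply Integrable.mono' (hd'.norm.restrict.const_mul M0) hGmeas
    filter_upwards [hmem] with t ht
    exact (norm_inner_le_norm _ _).trans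
      (mul_le_mul_of_nonneg_right (hGbd t ht) (norm_nonneg _))
  -- integrability of each cost term
  have hterm_int : ∀ i, Integrable
      (fun t => L i (x t, u t) * (X i).indicator (fun _ => (1:ℝ)) (x t)) μ := by
    intro i
    set F : ℝ → ℝ := fun t => L i (y t, u t) * (X i).indicator (fun _ => (1:ℝ)) (y t) with hF
    have hcongr : F =ᵐ[μ] fun t => L i (x t, u t) * (X i).indicator (fun _ => (1:ℝ)) (x t) := by
      filter_upwards [hmem] with t ht
      rw [hF]; simp only [hyx t ht]
    have hFmeas : AEStronglyMeasurable F μ := by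
      apply AEStronglyMeasurable.mul
      · exact ((hL i).measurable.comp
          (hycont.measurable.prodMk u_meas)).aestronglyMeasurable.restrict
      · exact ((measurable_const.indicator (hX i).isClosed.measurableSet).comp
          hycont.measurable).aestronglyMeasurable.restrict
    obtain ⟨C, hC⟩ := ((isCompact_Icc.image hycont).prod hUc).exists_bound_of_continuousOn
      (hL i).continuousOn
    have hFint : Integrable F μ := by
      apply Integrable.mono' (integrable_const (max C 0)) hFmeas
      filter_upwards [hmem] with t ht
      have h1 : ‖L i (y t, u t)‖ ≤ max C 0 :=
        (hC (y t, u t) ⟨⟨t, ht, rfl⟩, u_mem t ht⟩).trans (le_max_left _ _)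
      have h2 : (X i).indicator (fun _ => (1:ℝ)) (y t) ≤ 1 := by
        by_cases h : y t ∈ X i <;> simp [h]
      have h3 : (0:ℝ) ≤ (X i).indicator (fun _ => (1:ℝ)) (y t) := by
        by_cases h : y t ∈ X i <;> simp [h]
      calc ‖F t‖ = ‖L i (y t, u t)‖ * (X i).indicator (fun _ => (1:ℝ)) (y t) := by
            rw [hF, norm_mul]; congr 1; rw [Real.norm_eq_abs, abs_of_nonneg h3]
        _ ≤ max C 0 * 1 := mul_le_mul h1 h2 h3 (le_max_right _ _)
        _ = max C 0 := mul_one _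
    exact hFint.congr hcongr
  have hℓint : Integrable ℓ μ := by
    simp only [hℓdef]
    exact integrable_finset_sum _ (fun i _ => hterm_int i)
  -- the key pointwise inequality
  have hkey : ∀ᵐ t ∂μ, -ℓ t ≤ ⟪gradient v (y t), d' t⟫ := by
    filter_upwards [hmem, hode, hover] with t ht hodet hovert
    obtain ⟨i, hi⟩ := mem_iUnion.mp (x_mem t ht)
    have hd't : d' t = d t := indicator_of_mem ht d
    have hdt : d t = A i (x t) + a i + B i (u t) := hodet i hi
    have huniq : ∀ j, j ≠ i → x t ∉ X j := fun j hj hmemj =>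
      hovert ⟨ht, j, i, hj, hmemj, hi⟩
    have hsum : ℓ t = L i (x t, u t) := by
      simp only [hℓdef]
      rw [Finset.sum_eq_single i]
      · rw [indicator_of_mem hi, mul_one]
      · intro j _ hj
        rw [indicator_of_notMem (huniq j hj), mul_zero]
      · intro h; exact absurd (Finset.mem_univ i) h
    have := hpos i (x t) hi (u t) (u_mem t ht)
    rw [hsum, hyx t ht, hd't, hdt]
    linarith
  -- put everything together
  have hftc := ftc_l1 v hv (x 0) d' hd' T hT
  have hyT : y T = x 0 + ∫ s in (0:ℝ)..T, d' s := rfl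
  have hineq : ∫ t, -ℓ t ∂μ ≤ ∫ t, ⟪gradient v (y t), d' t⟫ ∂μ :=
    integral_mono_ae hℓint.neg hGint hkey
  have hconv : (∫ t in (0:ℝ)..T, ⟪gradient v (y t), d' t⟫)
      = ∫ t, ⟪gradient v (y t), d' t⟫ ∂μ := intervalIntegral.integral_of_le hT
  have hmain : v (y T) - v (x 0) ≥ ∫ t, -ℓ t ∂μ := by
    rw [← hyT] at hftc
    rw [hftc, hconv]; exact hineq
  have hsum_eq : (∑ i, ∫ t in (0:ℝ)..T,
      L i (x t, u t) * (X i).indicator (fun _ => (1:ℝ)) (x t)) = ∫ t, ℓ t ∂μ := by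
    have h1 : ∫ t, ℓ t ∂μ = ∑ i, ∫ t,
        L i (x t, u t) * (X i).indicator (fun _ => (1:ℝ)) (x t) ∂μ := by
      simp only [hℓdef]
      exact integral_finset_sum _ (fun i _ => hterm_int i)
    rw [h1]
    exact Finset.sum_congr rfl fun i _ => intervalIntegral.integral_of_le hT
  have hyTx : y T = x T := hyx T ⟨hT, le_rfl⟩
  rw [hsum_eq]
  rw [integral_neg] at hmain
  rw [hyTx] at hmain
  linarith

/-- verification / weak duality along trajectories. If `v` is `C¹` with
`⟪∇v(y), Aᵢ y + aᵢ + Bᵢ w⟫ + Lᵢ(y,w) ≥ 0` on each `Xᵢ × U` and `v ≤ L_T` on `X_T`, then the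
cost of every admissible process is at least `v(x(0))`. -/
theorem pwa_verification {n m r : ℕ}
    (X : Fin r → Set (EuclideanSpace ℝ (Fin n))) (hX : ∀ i, IsCompact (X i))
    (hdisj : ∀ i j, i ≠ j → Disjoint (interior (X i)) (interior (X j)))
    (U : Set (EuclideanSpace ℝ (Fin m))) (hU : IsCompact U)
    (A : Fin r → (EuclideanSpace ℝ (Fin n) →L[ℝ] EuclideanSpace ℝ (Fin n)))
    (a : Fin r → EuclideanSpace ℝ (Fin n))
    (B : Fin r → (EuclideanSpace ℝ (Fin m) →L[ℝ] EuclideanSpace ℝ (Fin n)))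
    (XT : Set (EuclideanSpace ℝ (Fin n))) (hXT : IsCompact XT)
    (L : Fin r → (EuclideanSpace ℝ (Fin n) × EuclideanSpace ℝ (Fin m) → ℝ))
    (hL : ∀ i, Continuous (L i))
    (LT : EuclideanSpace ℝ (Fin n) → ℝ) (hLT : Continuous LT)
    (v : EuclideanSpace ℝ (Fin n) → ℝ) (hv : ContDiff ℝ 1 v)
    (hpos : ∀ i, ∀ y ∈ X i, ∀ w ∈ U,
      0 ≤ ⟪gradient v y, A i y + a i + B i w⟫ + L i (y, w))
    (hterm : ∀ y ∈ XT, v y ≤ LT y)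
    (P : PWAProcess n m r X U A a B XT) :
    v (P.x 0) ≤ LT (P.x P.T) + ∑ i, ∫ t in (0 : ℝ)..P.T,
        L i (P.x t, P.u t) * (X i).indicator (fun _ => (1 : ℝ)) (P.x t) := by
  have h := pwa_core X hX U A a hU B L hL v hv P.T P.T_pos.le P.x P.u P.u_meas P.u_mem
    P.d P.d_meas P.d_intble P.x_eq P.x_mem P.ode P.overlap hpos
  have h2 := hterm _ P.terminal
  linarith
end

section
/- (Complementarity along optimal trajectories.) In the PWA optimal control setting with continuous running costs L_i and continuous terminal cost L_T, suppose v : ℝⁿ → ℝ is continuously differentiable with ∇v(y) · (A_i y + a_i + B_i w) + L_i(y,w) ≥ 0 on X_i × U for every i and v ≤ L_T on X_T. If an admissible process (T, u, x) attains the bound, i.e. its cost L_T(x(T)) + Σᵢ ∫₀ᵀ L_i(x(t),u(t)) 1_{X_i}(x(t)) dt equals v(x(0)), then v(x(T)) = L_T(x(T)) and, for almost every t ∈ [0,T], ∇v(x(t)) · (A_i x(t) + a_i + B_i u(t)) + L_i(x(t),u(t)) = 0 for the index i with x(t) ∈ X_i. -/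
open MeasureTheory Set
open scoped RealInnerProductSpace

section Aux

variable {n : ℕ}


variable {n : ℕ}

local notation "E" => EuclideanSpace ℝ (Fin n)

lemma inner_gradient_apply (v : E → ℝ) (y w : E) :
    ⟪gradient v y, w⟫ = fderiv ℝ v y w :=
  InnerProductSpace.toDual_symm_apply

lemma continuous_gradient {v : E → ℝ} (hv : ContDiff ℝ 1 v) :
    Continuous (gradient v) := by
  have h1 : Continuous (fderiv ℝ v) := hv.continuous_fderiv one_ne_zero
  exact ((InnerProductSpace.toDual ℝ (E)).symm.continuous).comp h1

lemma ftc_comp (v : E → ℝ) (hv : ContDiff ℝ 1 v) (T : ℝ) (hT : 0 ≤ T)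
    (x0 : E) (D : ℝ → E) (hD : Integrable D) :
    ∫ t in (0:ℝ)..T, ⟪gradient v (x0 + ∫ s in (0:ℝ)..t, D s), D t⟫
      = v (x0 + ∫ s in (0:ℝ)..T, D s) - v x0 := by
  classical
  set x : ℝ → E := fun t => x0 + ∫ s in (0:ℝ)..t, D s with hx
  have x_cont : Continuous x := continuous_const.add (hD.continuous_primitive 0)
  have grad_cont : Continuous (gradient v) := continuous_gradient hv
  -- compact neighborhood
  set K : Set (E) := Metric.cthickening 1 (x '' Icc 0 T) with hK
  have hKcomp : IsCompact K := (isCompact_Icc.image x_cont).cthickening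
  have hxK : ∀ t ∈ Icc (0:ℝ) T, x t ∈ K := fun t ht =>
    Metric.self_subset_cthickening _ (mem_image_of_mem x ht)
  -- bound on gradient over K
  obtain ⟨C, hC⟩ := hKcomp.exists_bound_of_continuousOn grad_cont.continuousOn
  set M : ℝ := max C 0 with hM
  have hMnonneg : 0 ≤ M := le_max_right _ _
  have hMbound : ∀ y ∈ K, ‖gradient v y‖ ≤ M := fun y hy => (hC y hy).trans (le_max_left _ _)
  -- uniform continuity of gradient and of v on K
  have hucg : UniformContinuousOn (gradient v) K :=
    hKcomp.uniformContinuousOn_of_continuous grad_cont.continuousOn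
  have hucv : UniformContinuousOn v K :=
    hKcomp.uniformContinuousOn_of_continuous (hv.continuous).continuousOn
  set ID : ℝ := ∫ t in (0:ℝ)..T, ‖D t‖ with hID
  have hIDnn : 0 ≤ ID :=
    intervalIntegral.integral_nonneg hT (fun t _ => norm_nonneg _)
  -- main estimate
  have key : ∀ ε > (0:ℝ),
      |(∫ t in (0:ℝ)..T, ⟪gradient v (x t), D t⟫) - (v (x T) - v x0)| ≤ 0 + ε := by
    intro ε hε
    obtain ⟨δ1, hδ1pos, hδ1⟩ := (Metric.uniformContinuousOn_iff_le.mp hucg)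
      (ε / (3 * (ID + 1))) (by positivity)
    obtain ⟨δ2, hδ2pos, hδ2⟩ := (Metric.uniformContinuousOn_iff_le.mp hucv)
      (ε / 3) (by positivity)
    set η : ℝ := min (min 1 (ε / (3 * (M + 1)))) (min δ1 δ2) with hη
    have hηpos : 0 < η := by
      refine lt_min (lt_min one_pos (by positivity)) (lt_min hδ1pos hδ2pos)
    obtain ⟨g, -, hg_close, hg_cont, hg_int⟩ :=
      hD.exists_hasCompactSupport_integral_sub_le hηpos
    set xg : ℝ → E := fun t => x0 + ∫ s in (0:ℝ)..t, g s with hxg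
    -- each partial L¹ distance is ≤ η
    have hL1 : ∀ t ∈ Icc (0:ℝ) T, ‖xg t - x t‖ ≤ η := by
      intro t ht
      have h1 : xg t - x t = ∫ s in (0:ℝ)..t, (g s - D s) := by
        simp only [hxg, hx, add_sub_add_left_eq_sub]
        rw [intervalIntegral.integral_sub (hg_int.intervalIntegrable)
          (hD.intervalIntegrable)]
      rw [h1]
      calc ‖∫ s in (0:ℝ)..t, (g s - D s)‖
          ≤ ∫ s in (0:ℝ)..t, ‖g s - D s‖ :=
            intervalIntegral.norm_integral_le_integral_norm ht.1
        _ = ∫ s in Set.Ioc (0:ℝ) t, ‖g s - D s‖ := intervalIntegral.integral_of_le ht.1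
        _ ≤ ∫ s, ‖g s - D s‖ := by
            apply setIntegral_le_integral ((hg_int.sub hD).norm)
            filter_upwards with s using norm_nonneg _
        _ = ∫ s, ‖D s - g s‖ := by simp only [norm_sub_rev]
        _ ≤ η := hg_close
    have hxgK : ∀ t ∈ Icc (0:ℝ) T, xg t ∈ K := by
      intro t ht
      refine Metric.mem_cthickening_of_dist_le (xg t) (x t) 1 _ (mem_image_of_mem x ht) ?_
      rw [dist_eq_norm]
      exact (hL1 t ht).trans ((min_le_left _ _).trans (min_le_left _ _))
    -- FTC for the smooth approximation
    have hxg_deriv : ∀ t : ℝ, HasDerivAt xg (g t) t := by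
      intro t
      have : HasDerivAt (fun t => ∫ s in (0:ℝ)..t, g s) (g t) t :=
        intervalIntegral.integral_hasDerivAt_right (hg_int.intervalIntegrable)
          hg_cont.aestronglyMeasurable.stronglyMeasurableAtFilter hg_cont.continuousAt
      simpa [hxg] using this.const_add x0
    have hcomp_deriv : ∀ t : ℝ, HasDerivAt (fun t => v (xg t)) (fderiv ℝ v (xg t) (g t)) t := by
      intro t
      exact ((hv.differentiable one_ne_zero (xg t)).hasFDerivAt).comp_hasDerivAt t (hxg_deriv t)
    have hcont_integrand : Continuous fun t => fderiv ℝ v (xg t) (g t) :=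
      Continuous.clm_apply ((hv.continuous_fderiv one_ne_zero).comp
        (continuous_const.add (hg_int.continuous_primitive 0))) hg_cont
    have hftc : ∫ t in (0:ℝ)..T, fderiv ℝ v (xg t) (g t) = v (xg T) - v (xg 0) :=
      intervalIntegral.integral_eq_sub_of_hasDerivAt (fun t _ => hcomp_deriv t)
        (hcont_integrand.intervalIntegrable 0 T)
    have hxg0 : xg 0 = x0 := by simp [hxg]
    have heq2 : ∫ t in (0:ℝ)..T, ⟪gradient v (xg t), g t⟫ = v (xg T) - v x0 := by
      simp only [inner_gradient_apply]
      rw [hftc, hxg0]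
    -- integrability of the main integrand
    set εg : ℝ := ε / (3 * (ID + 1)) with hεg
    have hI1 : IntervalIntegrable (fun t => ⟪gradient v (x t), D t⟫) volume 0 T := by
      rw [intervalIntegrable_iff_integrableOn_Icc_of_le hT]
      refine Integrable.mono' ((hD.norm.const_mul M).integrableOn)
        (((grad_cont.comp x_cont).aemeasurable.inner hD.aemeasurable).aestronglyMeasurable.restrict) ?_
      filter_upwards [ae_restrict_mem measurableSet_Icc] with t ht
      calc ‖⟪gradient v (x t), D t⟫‖ ≤ ‖gradient v (x t)‖ * ‖D t‖ := norm_inner_le_norm _ _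
        _ ≤ M * ‖D t‖ := by
            gcongr
            exact hMbound _ (hxK t ht)
    have hI2 : IntervalIntegrable (fun t => ⟪gradient v (xg t), g t⟫) volume 0 T := by
      apply Continuous.intervalIntegrable
      exact ((grad_cont.comp (continuous_const.add (hg_int.continuous_primitive 0))).inner hg_cont)
    have hGD : ∀ t ∈ Icc (0:ℝ) T, (∫ s in (0:ℝ)..t, ‖D s - g s‖) ≤ η := by
      intro t ht
      calc (∫ s in (0:ℝ)..t, ‖D s - g s‖)
          = ∫ s in Set.Ioc (0:ℝ) t, ‖D s - g s‖ := intervalIntegral.integral_of_le ht.1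
        _ ≤ ∫ s, ‖D s - g s‖ := by
            apply setIntegral_le_integral ((hD.sub hg_int).norm)
            filter_upwards with s using norm_nonneg _
        _ ≤ η := hg_close
    -- pointwise bound of the difference of integrands on [0,T]
    have hpt : ∀ t ∈ Icc (0:ℝ) T,
        ‖⟪gradient v (x t), D t⟫ - ⟪gradient v (xg t), g t⟫‖
          ≤ M * ‖D t - g t‖ + εg * ‖D t‖ := by
      intro t ht
      have hsplit : ⟪gradient v (x t), D t⟫ - ⟪gradient v (xg t), g t⟫
          = ⟪gradient v (x t) - gradient v (xg t), D t⟫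
            + ⟪gradient v (xg t), D t - g t⟫ := by
        rw [inner_sub_left, inner_sub_right]; ring
      have hgd : ‖gradient v (x t) - gradient v (xg t)‖ ≤ εg := by
        have hd : dist (x t) (xg t) ≤ δ1 := by
          rw [dist_eq_norm, norm_sub_rev]
          exact (hL1 t ht).trans ((min_le_right _ _).trans (min_le_left _ _))
        have := hδ1 (x t) (hxK t ht) (xg t) (hxgK t ht) hd
        rwa [dist_eq_norm] at this
      calc ‖⟪gradient v (x t), D t⟫ - ⟪gradient v (xg t), g t⟫‖
          ≤ ‖⟪gradient v (x t) - gradient v (xg t), D t⟫‖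
            + ‖⟪gradient v (xg t), D t - g t⟫‖ := by rw [hsplit]; exact norm_add_le _ _
        _ ≤ ‖gradient v (x t) - gradient v (xg t)‖ * ‖D t‖
            + ‖gradient v (xg t)‖ * ‖D t - g t‖ :=
            add_le_add (norm_inner_le_norm _ _) (norm_inner_le_norm _ _)
        _ ≤ εg * ‖D t‖ + M * ‖D t - g t‖ := by
            gcongr
            exact hMbound _ (hxgK t ht)
        _ = M * ‖D t - g t‖ + εg * ‖D t‖ := by ring
    -- integral of the bound
    have hbound_int : IntervalIntegrable (fun t => M * ‖D t - g t‖ + εg * ‖D t‖) volume 0 T :=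
      (((hD.sub hg_int).norm.const_mul M).add (hD.norm.const_mul εg)).intervalIntegrable
    have hdiff : |(∫ t in (0:ℝ)..T, ⟪gradient v (x t), D t⟫)
        - (∫ t in (0:ℝ)..T, ⟪gradient v (xg t), g t⟫)| ≤ M * η + εg * ID := by
      rw [← intervalIntegral.integral_sub hI1 hI2, ← Real.norm_eq_abs]
      calc ‖∫ t in (0:ℝ)..T, (⟪gradient v (x t), D t⟫ - ⟪gradient v (xg t), g t⟫)‖
          ≤ ∫ t in (0:ℝ)..T, ‖⟪gradient v (x t), D t⟫ - ⟪gradient v (xg t), g t⟫‖ := by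
            exact intervalIntegral.norm_integral_le_integral_norm hT
        _ ≤ ∫ t in (0:ℝ)..T, (M * ‖D t - g t‖ + εg * ‖D t‖) :=
            intervalIntegral.integral_mono_on hT (hI1.sub hI2).norm hbound_int hpt
        _ = M * (∫ t in (0:ℝ)..T, ‖D t - g t‖) + εg * ID := by
            have hA : IntervalIntegrable (fun t => M * ‖D t - g t‖) volume 0 T :=
              ((hD.sub hg_int).norm.const_mul M).intervalIntegrable
            have hB : IntervalIntegrable (fun t => εg * ‖D t‖) volume 0 T :=
              (hD.norm.const_mul εg).intervalIntegrable
            rw [intervalIntegral.integral_add hA hB,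
              intervalIntegral.integral_const_mul, intervalIntegral.integral_const_mul]
        _ ≤ M * η + εg * ID := by
            gcongr
            exact hGD T ⟨hT, le_rfl⟩
    have hterm' : |v (xg T) - v (x T)| ≤ ε / 3 := by
      have hd : dist (xg T) (x T) ≤ δ2 := by
        rw [dist_eq_norm]
        exact (hL1 T ⟨hT, le_rfl⟩).trans ((min_le_right _ _).trans (min_le_right _ _))
      have := hδ2 (xg T) (hxgK T ⟨hT, le_rfl⟩) (x T) (hxK T ⟨hT, le_rfl⟩) hd
      rwa [Real.dist_eq] at this
    -- combine
    have hMη : M * η ≤ ε / 3 := by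
      have hη' : η ≤ ε / (3 * (M + 1)) := (min_le_left _ _).trans (min_le_right _ _)
      have : M * η ≤ M * (ε / (3 * (M + 1))) := by gcongr
      refine this.trans ?_
      rw [mul_comm, div_mul_eq_mul_div, div_le_div_iff₀ (by positivity) (by norm_num)]
      nlinarith
    have hεgID : εg * ID ≤ ε / 3 := by
      rw [hεg, div_mul_eq_mul_div, div_le_div_iff₀ (by positivity) (by norm_num)]
      nlinarith
    have habs : |(∫ t in (0:ℝ)..T, ⟪gradient v (x t), D t⟫) - (v (x T) - v x0)|
        ≤ |(∫ t in (0:ℝ)..T, ⟪gradient v (x t), D t⟫)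
            - (∫ t in (0:ℝ)..T, ⟪gradient v (xg t), g t⟫)| + |v (xg T) - v (x T)| := by
      have : (∫ t in (0:ℝ)..T, ⟪gradient v (x t), D t⟫) - (v (x T) - v x0)
          = ((∫ t in (0:ℝ)..T, ⟪gradient v (x t), D t⟫)
              - (∫ t in (0:ℝ)..T, ⟪gradient v (xg t), g t⟫)) + (v (xg T) - v (x T)) := by
        rw [heq2]; ring
      rw [this]
      exact abs_add_le _ _
    calc |(∫ t in (0:ℝ)..T, ⟪gradient v (x t), D t⟫) - (v (x T) - v x0)|
        ≤ (M * η + εg * ID) + ε / 3 := habs.trans (add_le_add hdiff hterm')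
      _ ≤ 0 + ε := by linarith
  have h0 : |(∫ t in (0:ℝ)..T, ⟪gradient v (x t), D t⟫) - (v (x T) - v x0)| ≤ 0 :=
    le_of_forall_pos_le_add key
  have := abs_nonpos_iff.mp h0
  have := sub_eq_zero.mp this
  simpa [hx] using this

end Aux

/-- complementarity along optimal trajectories. If `v` is a `C¹` subsolution
of the HJB system and an admissible process attains the bound `v(x(0))`, then
`v(x(T)) = L_T(x(T))` and, for almost every `t ∈ [0,T]`, the Hamiltonian vanishes:
`⟪∇v(x(t)), Aᵢ x(t) + aᵢ + Bᵢ u(t)⟫ + Lᵢ(x(t),u(t)) = 0` for the index `i` with `x(t) ∈ Xᵢ`. -/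
theorem pwa_complementarity {n m r : ℕ}
    (X : Fin r → Set (EuclideanSpace ℝ (Fin n))) (hX : ∀ i, IsCompact (X i))
    (hdisj : ∀ i j, i ≠ j → Disjoint (interior (X i)) (interior (X j)))
    (U : Set (EuclideanSpace ℝ (Fin m))) (hU : IsCompact U)
    (A : Fin r → (EuclideanSpace ℝ (Fin n) →L[ℝ] EuclideanSpace ℝ (Fin n)))
    (a : Fin r → EuclideanSpace ℝ (Fin n))
    (B : Fin r → (EuclideanSpace ℝ (Fin m) →L[ℝ] EuclideanSpace ℝ (Fin n)))
    (XT : Set (EuclideanSpace ℝ (Fin n))) (hXT : IsCompact XT)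
    (L : Fin r → (EuclideanSpace ℝ (Fin n) × EuclideanSpace ℝ (Fin m) → ℝ))
    (hL : ∀ i, Continuous (L i))
    (LT : EuclideanSpace ℝ (Fin n) → ℝ) (hLT : Continuous LT)
    (v : EuclideanSpace ℝ (Fin n) → ℝ) (hv : ContDiff ℝ 1 v)
    (hpos : ∀ i, ∀ y ∈ X i, ∀ w ∈ U,
      0 ≤ ⟪gradient v y, A i y + a i + B i w⟫ + L i (y, w))
    (hterm : ∀ y ∈ XT, v y ≤ LT y)
    (P : PWAProcess n m r X U A a B XT)
    (hopt : LT (P.x P.T) + ∑ i, ∫ t in (0 : ℝ)..P.T,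
        L i (P.x t, P.u t) * (X i).indicator (fun _ => (1 : ℝ)) (P.x t) = v (P.x 0)) :
    v (P.x P.T) = LT (P.x P.T)
    ∧ ∀ᵐ t ∂(volume.restrict (Icc (0 : ℝ) P.T)), ∀ i, P.x t ∈ X i →
        ⟪gradient v (P.x t), A i (P.x t) + a i + B i (P.u t)⟫ + L i (P.x t, P.u t) = 0 := by
  classical
  have hT : (0:ℝ) ≤ P.T := P.T_pos.le
  set T := P.T with hTdef
  set D : ℝ → EuclideanSpace ℝ (Fin n) := (Icc (0:ℝ) T).indicator P.d with hDdef
  have hD : Integrable D := P.d_intble.integrable_indicator measurableSet_Icc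
  set y : ℝ → EuclideanSpace ℝ (Fin n) :=
    fun t => P.x 0 + ∫ s in (0:ℝ)..t, D s with hydef
  have y_cont : Continuous y := continuous_const.add (hD.continuous_primitive 0)
  have hyx : ∀ t ∈ Icc (0:ℝ) T, y t = P.x t := by
    intro t ht
    have hEq : EqOn D P.d (uIcc (0:ℝ) t) := by
      intro s hs
      rw [uIcc_of_le ht.1] at hs
      exact indicator_of_mem (Icc_subset_Icc le_rfl ht.2 hs) _
    rw [hydef]
    simp only
    rw [intervalIntegral.integral_congr hEq, ← P.x_eq t ht]
  have hkey : ∫ t in (0:ℝ)..T, ⟪gradient v (y t), D t⟫ = v (P.x T) - v (P.x 0) := by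
    have := ftc_comp v hv T hT (P.x 0) D hD
    rw [← hyx T ⟨hT, le_rfl⟩]
    exact this
  set μ := volume.restrict (Icc (0:ℝ) T) with hμ
  set F : ℝ → ℝ := fun t => ⟪gradient v (y t), D t⟫ with hF
  set ℓ : Fin r → ℝ → ℝ := fun i t =>
    L i (y t, P.u t) * (X i).indicator (fun _ => (1:ℝ)) (y t) with hℓ
  have grad_cont : Continuous (gradient v) := continuous_gradient hv
  -- integrability of F on Icc
  obtain ⟨C, hC⟩ := ((isCompact_Icc.image y_cont)).exists_bound_of_continuousOn
    grad_cont.continuousOn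
  have hFint : Integrable F μ := by
    refine Integrable.mono' (((P.d_intble.integrable_indicator
        measurableSet_Icc).norm.const_mul (max C 0)).integrableOn)
      (((grad_cont.comp y_cont).aemeasurable.inner
        hD.aemeasurable).aestronglyMeasurable.restrict) ?_
    filter_upwards [ae_restrict_mem measurableSet_Icc] with t ht
    calc ‖F t‖ ≤ ‖gradient v (y t)‖ * ‖D t‖ := norm_inner_le_norm _ _
      _ ≤ max C 0 * ‖D t‖ := by
          gcongr
          exact (hC (y t) (mem_image_of_mem y ht)).trans (le_max_left _ _)
  -- integrability of each ℓ i on Icc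
  have hℓmeas : ∀ i, AEStronglyMeasurable (ℓ i) μ := by
    intro i
    have h1 : Measurable fun t => L i (y t, P.u t) :=
      (hL i).measurable.comp ((y_cont.measurable).prodMk P.u_meas)
    have h2 : Measurable fun t => (X i).indicator (fun _ => (1:ℝ)) (y t) :=
      (measurable_const.indicator (hX i).isClosed.measurableSet).comp y_cont.measurable
    exact (h1.mul h2).aestronglyMeasurable.restrict
  have hℓint : ∀ i, Integrable (ℓ i) μ := by
    intro i
    obtain ⟨Ci, hCi⟩ := (((isCompact_Icc.image y_cont)).prod hU).exists_bound_of_continuousOn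
      (hL i).continuousOn
    refine Integrable.mono' (integrable_const (max Ci 0)) (hℓmeas i) ?_
    filter_upwards [ae_restrict_mem measurableSet_Icc] with t ht
    have hind : (X i).indicator (fun _ => (1:ℝ)) (y t) = 0 ∨
        (X i).indicator (fun _ => (1:ℝ)) (y t) = 1 := by
      by_cases h : y t ∈ X i
      · right; simp [indicator_of_mem h]
      · left; simp [indicator_of_notMem h]
    have hLb : |L i (y t, P.u t)| ≤ max Ci 0 := by
      have := hCi (y t, P.u t) ⟨mem_image_of_mem y ht, P.u_mem t ht⟩
      rw [Real.norm_eq_abs] at this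
      exact this.trans (le_max_left _ _)
    rcases hind with h | h <;>
      simp only [hℓ, Real.norm_eq_abs, h, mul_zero, mul_one, abs_zero]
    · positivity
    · exact hLb
  -- a.e. structural facts
  have hov : ∀ᵐ t ∂μ, t ∉ {t | t ∈ Icc (0:ℝ) T ∧
      ∃ i j, i ≠ j ∧ P.x t ∈ X i ∧ P.x t ∈ X j} := by
    refine compl_mem_ae_iff.mpr ?_
    refine le_antisymm ?_ zero_le
    calc μ _ ≤ volume {t | t ∈ Icc (0:ℝ) T ∧ ∃ i j, i ≠ j ∧ P.x t ∈ X i ∧ P.x t ∈ X j} :=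
          Measure.restrict_le_self _
      _ = 0 := P.overlap
  have hclaim : ∀ᵐ t ∂μ, 0 ≤ F t + ∑ i, ℓ i t ∧
      ∀ i, P.x t ∈ X i →
        ⟪gradient v (P.x t), A i (P.x t) + a i + B i (P.u t)⟫ + L i (P.x t, P.u t)
          = F t + ∑ i, ℓ i t := by
    filter_upwards [ae_restrict_mem measurableSet_Icc, hov, P.ode] with t ht hovt hodet
    obtain ⟨_, ⟨i0, rfl⟩, hi0⟩ := P.x_mem t ht
    have huniq : ∀ j, P.x t ∈ X j → j = i0 := by
      intro j hj
      by_contra hne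
      exact hovt ⟨ht, j, i0, hne, hj, hi0⟩
    have hyt : y t = P.x t := hyx t ht
    have hDt : D t = P.d t := indicator_of_mem ht _
    have hsum : ∑ i, ℓ i t = L i0 (P.x t, P.u t) := by
      rw [← Finset.sum_subset (Finset.subset_univ {i0})]
      · simp [hℓ, hyt, indicator_of_mem hi0]
      · intro j _ hj
        simp only [Finset.mem_singleton] at hj
        have : P.x t ∉ X j := fun hmem => hj (huniq j hmem)
        simp [hℓ, hyt, indicator_of_notMem this]
    have hFt : F t = ⟪gradient v (P.x t), A i0 (P.x t) + a i0 + B i0 (P.u t)⟫ := by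
      rw [hF]
      simp only
      rw [hyt, hDt, hodet i0 hi0]
    constructor
    · rw [hFt, hsum]
      exact hpos i0 (P.x t) hi0 (P.u t) (P.u_mem t ht)
    · intro i hi
      rcases huniq i hi with rfl
      rw [hFt, hsum]
  -- value of the total integral
  have hIF : ∫ t, F t ∂μ = v (P.x T) - v (P.x 0) := by
    rw [← hkey, intervalIntegral.integral_of_le hT]
    exact integral_Icc_eq_integral_Ioc
  have hIℓ : ∀ i, ∫ t, ℓ i t ∂μ
      = ∫ t in (0:ℝ)..T, L i (P.x t, P.u t) * (X i).indicator (fun _ => (1:ℝ)) (P.x t) := by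
    intro i
    rw [show (∫ t, ℓ i t ∂μ) = ∫ t in Ioc (0:ℝ) T, ℓ i t from integral_Icc_eq_integral_Ioc,
      intervalIntegral.integral_of_le hT]
    refine setIntegral_congr_fun measurableSet_Ioc ?_
    intro t ht
    have := hyx t (Ioc_subset_Icc_self ht)
    simp only [hℓ, this]
  have hsum_int : Integrable (fun t => ∑ i, ℓ i t) μ :=
    integrable_finset_sum _ (fun i _ => hℓint i)
  have htotal : ∫ t, (F t + ∑ i, ℓ i t) ∂μ = v (P.x T) - LT (P.x T) := by
    rw [integral_add hFint hsum_int, integral_finset_sum _ (fun i _ => hℓint i), hIF]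
    have : ∑ i, ∫ t, ℓ i t ∂μ = v (P.x 0) - LT (P.x T) := by
      rw [Finset.sum_congr rfl (fun i _ => hIℓ i)]
      linarith [hopt]
    rw [this]; ring
  have hnn : 0 ≤ ∫ t, (F t + ∑ i, ℓ i t) ∂μ :=
    integral_nonneg_of_ae (hclaim.mono fun t h => h.1)
  have hle : v (P.x T) - LT (P.x T) ≤ 0 :=
    sub_nonpos.mpr (hterm _ P.terminal)
  have htot0 : ∫ t, (F t + ∑ i, ℓ i t) ∂μ = 0 :=
    le_antisymm (htotal ▸ hle) hnn
  have hvT : v (P.x T) = LT (P.x T) := by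
    have := htotal ▸ htot0
    linarith [htotal, htot0]
  refine ⟨hvT, ?_⟩
  have hzero : (fun t => F t + ∑ i, ℓ i t) =ᵐ[μ] 0 :=
    (integral_eq_zero_iff_of_nonneg_ae (hclaim.mono fun t h => h.1)
      (hFint.add hsum_int)).mp htot0
  filter_upwards [hclaim, hzero] with t hcl hz i hxi
  rw [hcl.2 i hxi]
  simpa using hz
end

section
/- (Weak duality between the measure LP and the dual LP on functions.) Let μ₁,…,μ_r, μ_T, μ₀ be a feasible measure tuple for the LP with initial measure μ₀. If w : ℝⁿ → ℝ is continuously differentiable and satisfies ∇w(y) · (A_i y + a_i + B_i u) + L_i(y,u) ≥ 0 for every i and every (y,u) ∈ X_i × U, and w(y) ≤ L_T(y) for every y ∈ X_T, then Σ_{i=1}^r ∫ L_i dμ_i + ∫ L_T dμ_T ≥ ∫ w dμ₀. -/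
open MeasureTheory Set
open scoped RealInnerProductSpace

lemma integrable_of_null_compl {α : Type*} [MeasurableSpace α] [TopologicalSpace α]
    [OpensMeasurableSpace α] [T2Space α] {μ : Measure α} [IsFiniteMeasure μ]
    {K : Set α} (hK : IsCompact K) (hμ : μ Kᶜ = 0) {f : α → ℝ} (hf : Continuous f) :
    Integrable f μ := by
  rw [← integrableOn_univ, ← Set.union_compl_self K]
  refine (hf.continuousOn.integrableOn_compact hK).union ?_
  rw [IntegrableOn, Measure.restrict_eq_zero.mpr hμ]
  exact integrable_zero_measure

/-- weak duality between the measure LP and the dual LP on functions.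
If `(μ₁,…,μ_r, μ_T)` is feasible for the LP with initial measure `μ₀` and `w` is a `C¹`
subsolution of the HJB system (`⟪∇w(y), Aᵢy + aᵢ + Bᵢu⟫ + Lᵢ(y,u) ≥ 0` on `Xᵢ × U`,
`w ≤ L_T` on `X_T`), then `Σᵢ ∫ Lᵢ dμᵢ + ∫ L_T dμ_T ≥ ∫ w dμ₀`. -/
theorem lp_weak_duality {n m r : ℕ}
    (X : Fin r → Set (EuclideanSpace ℝ (Fin n))) (hX : ∀ i, IsCompact (X i))
    (U : Set (EuclideanSpace ℝ (Fin m))) (hU : IsCompact U)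
    (A : Fin r → (EuclideanSpace ℝ (Fin n) →L[ℝ] EuclideanSpace ℝ (Fin n)))
    (a : Fin r → EuclideanSpace ℝ (Fin n))
    (B : Fin r → (EuclideanSpace ℝ (Fin m) →L[ℝ] EuclideanSpace ℝ (Fin n)))
    (L : Fin r → (EuclideanSpace ℝ (Fin n) × EuclideanSpace ℝ (Fin m) → ℝ))
    (hL : ∀ i, Continuous (L i))
    (LT : EuclideanSpace ℝ (Fin n) → ℝ) (hLT : Continuous LT)
    (XT X0 : Set (EuclideanSpace ℝ (Fin n))) (hXT : IsCompact XT) (hX0 : IsCompact X0)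
    (μ0 : Measure (EuclideanSpace ℝ (Fin n))) [IsProbabilityMeasure μ0]
    (hμ0 : μ0 X0ᶜ = 0)
    (μ : Fin r → Measure (EuclideanSpace ℝ (Fin n) × EuclideanSpace ℝ (Fin m)))
    (hμfin : ∀ i, IsFiniteMeasure (μ i))
    (hμsupp : ∀ i, μ i (X i ×ˢ U)ᶜ = 0)
    (μT : Measure (EuclideanSpace ℝ (Fin n))) [IsProbabilityMeasure μT]
    (hμT : μT XTᶜ = 0)
    (hfeas : ∀ v : EuclideanSpace ℝ (Fin n) → ℝ, ContDiff ℝ 1 v →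
      ∑ i, ∫ p, ⟪gradient v p.1, A i p.1 + a i + B i p.2⟫ ∂(μ i)
        = (∫ y, v y ∂μT) - ∫ y, v y ∂μ0)
    (w : EuclideanSpace ℝ (Fin n) → ℝ) (hw : ContDiff ℝ 1 w)
    (hwpos : ∀ i, ∀ y ∈ X i, ∀ u ∈ U,
      0 ≤ ⟪gradient w y, A i y + a i + B i u⟫ + L i (y, u))
    (hwT : ∀ y ∈ XT, w y ≤ LT y) :
    ∫ y, w y ∂μ0 ≤ (∑ i, ∫ p, L i p ∂(μ i)) + ∫ y, LT y ∂μT := by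
  have hμfin' := hμfin
  have hgradcont : Continuous (gradient w) := by
    have h1 : Continuous (fderiv ℝ w) := hw.continuous_fderiv one_ne_zero
    exact ((InnerProductSpace.toDual ℝ _).symm.continuous).comp h1
  set g : Fin r → (EuclideanSpace ℝ (Fin n) × EuclideanSpace ℝ (Fin m)) → ℝ :=
    fun i p => ⟪gradient w p.1, A i p.1 + a i + B i p.2⟫ with hg
  have hgcont : ∀ i, Continuous (g i) := by
    intro i
    exact (hgradcont.comp continuous_fst).inner
      ((((A i).continuous.comp continuous_fst).add continuous_const).add
        ((B i).continuous.comp continuous_snd))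
  have key := hfeas w hw
  -- integrability
  have hintg : ∀ i, Integrable (g i) (μ i) := fun i =>
    have := hμfin i
    integrable_of_null_compl ((hX i).prod hU) (hμsupp i) (hgcont i)
  have hintL : ∀ i, Integrable (L i) (μ i) := fun i =>
    have := hμfin i
    integrable_of_null_compl ((hX i).prod hU) (hμsupp i) (hL i)
  have hw_int : Integrable w μT := integrable_of_null_compl hXT hμT hw.continuous
  have hLT_int : Integrable LT μT := integrable_of_null_compl hXT hμT hLT
  -- ∫ w dμT ≤ ∫ LT dμT
  have h1 : ∫ y, w y ∂μT ≤ ∫ y, LT y ∂μT := by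
    refine integral_mono_ae hw_int hLT_int ?_
    refine Filter.eventually_of_mem (U := {y | w y ≤ LT y}) ?_ (fun x hx => hx)
    rw [mem_ae_iff]
    refine measure_mono_null (fun y hy => ?_) hμT
    intro hyT
    exact hy (hwT y hyT)
  -- for each i : -∫ g i ≤ ∫ L i
  have h2 : ∀ i, -∫ p, g i p ∂(μ i) ≤ ∫ p, L i p ∂(μ i) := by
    intro i
    have := hμfin i
    have hnn : 0 ≤ ∫ p, (g i p + L i p) ∂(μ i) := by
      refine integral_nonneg_of_ae ?_
      refine Filter.eventually_of_mem (U := {p | 0 ≤ g i p + L i p}) ?_ (fun x hx => hx)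
      rw [mem_ae_iff]
      refine measure_mono_null (fun p hp => ?_) (hμsupp i)
      intro hpm
      exact hp (hwpos i p.1 hpm.1 p.2 hpm.2)
    rw [integral_add (hintg i) (hintL i)] at hnn
    linarith
  have h2' : -∑ i, ∫ p, g i p ∂(μ i) ≤ ∑ i, ∫ p, L i p ∂(μ i) := by
    rw [← Finset.sum_neg_distrib]
    exact Finset.sum_le_sum fun i _ => h2 i
  have : ∑ i, ∫ p, g i p ∂(μ i) = (∫ y, w y ∂μT) - ∫ y, w y ∂μ0 := key
  linarith
end

section
/- For the scalar PWA example with the optimal feedback k*(x) = −x − 1 + √(2(x − 1)² + (x + 1)²) on the cell X₂ = {x ≤ 0}, the closed-loop vector field satisfies x + 1 + k*(x) = √(2(x − 1)² + (x + 1)²) ≥ √3 for every x ≤ 0. Consequently, if x : [0,τ] → (−∞, 0] is differentiable with x'(t) = x(t) + 1 + k*(x(t)) for all t ∈ [0,τ] and x(0) = x₀ ≤ 0, then τ ≤ −x₀/√3; i.e. the closed-loop trajectory leaves the cell X₂ in finite time at most −x₀/√3. -/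
/-- With the optimal feedback `k*(x) = −x − 1 + √(2(x−1)² + (x+1)²)` on the
cell `X₂ = {x ≤ 0}`, the closed-loop vector field satisfies
`x + 1 + k*(x) = √(2(x−1)² + (x+1)²) ≥ √3` for every `x ≤ 0`; consequently, any
differentiable closed-loop trajectory `x : [0,τ] → (−∞,0]` with `x(0) = x₀ ≤ 0` satisfies
`τ ≤ −x₀/√3`, i.e. it leaves the cell `X₂` in finite time at most `−x₀/√3`. -/
theorem scalar_pwa_cell2_exit_time (k : ℝ → ℝ)
    (hk : k = fun x => -x - 1 + Real.sqrt (2 * (x - 1) ^ 2 + (x + 1) ^ 2)) :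
    (∀ x : ℝ, x ≤ 0 →
      x + 1 + k x = Real.sqrt (2 * (x - 1) ^ 2 + (x + 1) ^ 2) ∧
      Real.sqrt 3 ≤ Real.sqrt (2 * (x - 1) ^ 2 + (x + 1) ^ 2)) ∧
    ∀ (τ : ℝ) (x : ℝ → ℝ) (x₀ : ℝ), 0 ≤ τ → x₀ ≤ 0 → x 0 = x₀ →
      (∀ t ∈ Set.Icc (0 : ℝ) τ, x t ≤ 0) →
      (∀ t ∈ Set.Icc (0 : ℝ) τ, HasDerivAt x (x t + 1 + k (x t)) t) →
      τ ≤ -x₀ / Real.sqrt 3 := by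
  have key : ∀ x : ℝ, x ≤ 0 →
      x + 1 + k x = Real.sqrt (2 * (x - 1) ^ 2 + (x + 1) ^ 2) ∧
      Real.sqrt 3 ≤ Real.sqrt (2 * (x - 1) ^ 2 + (x + 1) ^ 2) := by
    intro x hx
    constructor
    · rw [hk]; ring
    · apply Real.sqrt_le_sqrt; nlinarith
  refine ⟨key, ?_⟩
  intro τ x x₀ hτ hx₀ hx0 hxle hderiv
  have h3 : (0:ℝ) < Real.sqrt 3 := Real.sqrt_pos.2 (by norm_num)
  -- g t = x t - √3 * t is monotone on [0,τ]
  set g : ℝ → ℝ := fun t => x t - Real.sqrt 3 * t with hg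
  have hgderiv : ∀ t ∈ Set.Icc (0:ℝ) τ,
      HasDerivAt g (x t + 1 + k (x t) - Real.sqrt 3) t := by
    intro t ht
    have := (hderiv t ht).sub ((hasDerivAt_id t).const_mul (Real.sqrt 3))
    exact this.congr_deriv (by ring)
  have hmono : MonotoneOn g (Set.Icc 0 τ) := by
    apply monotoneOn_of_deriv_nonneg (convex_Icc 0 τ)
    · exact fun t ht => ((hgderiv t ht).continuousAt).continuousWithinAt
    · intro t ht
      rw [interior_Icc] at ht
      exact (hgderiv t (Set.mem_Icc_of_Ioo ht)).differentiableAt.differentiableWithinAt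
    · intro t ht
      rw [interior_Icc] at ht
      have ht' := Set.mem_Icc_of_Ioo ht
      rw [(hgderiv t ht').deriv]
      have h1 := (key (x t) (hxle t ht')).1
      have h2 := (key (x t) (hxle t ht')).2
      linarith
  have hge : g 0 ≤ g τ := hmono (Set.left_mem_Icc.2 hτ) (Set.right_mem_Icc.2 hτ) hτ
  have hxτ : x τ ≤ 0 := hxle τ (Set.right_mem_Icc.2 hτ)
  simp only [hg, mul_zero, sub_zero, hx0] at hge
  rw [le_div_iff₀ h3]
  linarith
end
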